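/- Under the input kernel conditions, the function σ ↦ F_{ρ,μ}(x,σ) (defined as F(x,σ) = −∫ w(σ‖x−x'‖^θ) K/(∫K dμ) dμ(x') − log(∫ K dμ(x')) + log ρ with K = exp(−w(σ‖x−x'‖^θ))) is strictly increasing in σ for every fixed x. -/

import Mathlib

open MeasureTheory Filter

lemma cheb_aux {α : Type*} [MeasurableSpace α] {μ : Measure α} [SigmaFinite μ]
    {φ ψ₁ ψ₂ : α → ℝ}
    (hψ₁ : Integrable ψ₁ μ) (hψ₂ : Integrable ψ₂ μ)
    (hφψ₁ : Integrable (fun y => φ y * ψ₁ y) μ) (hφψ₂ : Integrable (fun y => φ y * ψ₂ y) μ)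
    (hpt : ∀ a b, (φ a - φ b) * (ψ₂ a * ψ₁ b - ψ₁ a * ψ₂ b) ≤ 0) :
    (∫ y, φ y * ψ₂ y ∂μ) * (∫ y, ψ₁ y ∂μ) ≤ (∫ y, φ y * ψ₁ y ∂μ) * (∫ y, ψ₂ y ∂μ) := by
  have h1 : Integrable (fun p : α × α => (φ p.1 * ψ₂ p.1) * ψ₁ p.2) (μ.prod μ) :=
    hφψ₂.mul_prod hψ₁
  have h2 : Integrable (fun p : α × α => (φ p.1 * ψ₁ p.1) * ψ₂ p.2) (μ.prod μ) :=
    hφψ₁.mul_prod hψ₂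
  have h3 : Integrable (fun p : α × α => ψ₂ p.1 * (φ p.2 * ψ₁ p.2)) (μ.prod μ) :=
    hψ₂.mul_prod hφψ₁
  have h4 : Integrable (fun p : α × α => ψ₁ p.1 * (φ p.2 * ψ₂ p.2)) (μ.prod μ) :=
    hψ₁.mul_prod hφψ₂
  have key : ∫ p : α × α, ((φ p.1 * ψ₂ p.1) * ψ₁ p.2 - (φ p.1 * ψ₁ p.1) * ψ₂ p.2
      - ψ₂ p.1 * (φ p.2 * ψ₁ p.2) + ψ₁ p.1 * (φ p.2 * ψ₂ p.2)) ∂(μ.prod μ) ≤ 0 := by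
    apply integral_nonpos
    intro p
    have h := hpt p.1 p.2
    have : (φ p.1 * ψ₂ p.1) * ψ₁ p.2 - (φ p.1 * ψ₁ p.1) * ψ₂ p.2
      - ψ₂ p.1 * (φ p.2 * ψ₁ p.2) + ψ₁ p.1 * (φ p.2 * ψ₂ p.2)
      = (φ p.1 - φ p.2) * (ψ₂ p.1 * ψ₁ p.2 - ψ₁ p.1 * ψ₂ p.2) := by ring
    simpa [this] using h
  have h12 : Integrable (fun p : α × α => (φ p.1 * ψ₂ p.1) * ψ₁ p.2
      - (φ p.1 * ψ₁ p.1) * ψ₂ p.2) (μ.prod μ) := h1.sub h2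
  have h123 : Integrable (fun p : α × α => (φ p.1 * ψ₂ p.1) * ψ₁ p.2
      - (φ p.1 * ψ₁ p.1) * ψ₂ p.2 - ψ₂ p.1 * (φ p.2 * ψ₁ p.2)) (μ.prod μ) := h12.sub h3
  rw [integral_add h123 h4, integral_sub h12 h3, integral_sub h1 h2,
    integral_prod_mul (f := fun y => φ y * ψ₂ y) (g := ψ₁),
    integral_prod_mul (f := fun y => φ y * ψ₁ y) (g := ψ₂),
    integral_prod_mul (f := ψ₂) (g := fun y => φ y * ψ₁ y),
    integral_prod_mul (f := ψ₁) (g := fun y => φ y * ψ₂ y)] at key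
  nlinarith [key]

/-- `F(x,σ) = -∫ w(σ‖x-x'‖^θ) K/(∫K dμ) dμ(x') - log(∫ K dμ) + log ρ`
with `K = exp(-w(σ‖x-x'‖^θ))`. -/
noncomputable def entropyF {d : ℕ} (w : ℝ → ℝ) (θ ρ : ℝ)
    (μ : Measure (EuclideanSpace ℝ (Fin d)))
    (x : EuclideanSpace ℝ (Fin d)) (σ : ℝ) : ℝ :=
  (-(∫ x', w (σ * ‖x - x'‖ ^ θ) * Real.exp (-(w (σ * ‖x - x'‖ ^ θ))) /
        (∫ x'', Real.exp (-(w (σ * ‖x - x''‖ ^ θ))) ∂μ) ∂μ))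
    - Real.log (∫ x', Real.exp (-(w (σ * ‖x - x'‖ ^ θ))) ∂μ) + Real.log ρ

/-- Under the input kernel conditions, `σ ↦ F_{ρ,μ}(x,σ)` is strictly increasing. -/
theorem entropyF_strictMono
    (d : ℕ) (hd : 2 ≤ d) (θ : ℝ) (hθ : 0 < θ) (ρ : ℝ) (hρ : ρ ∈ Set.Ioo (0:ℝ) 1)
    (f : EuclideanSpace ℝ (Fin d) → ℝ) (hfc : Continuous f)
    (hfb : ∃ M, ∀ x, f x ≤ M) (hfpos : ∀ x, 0 < f x)
    (μ : Measure (EuclideanSpace ℝ (Fin d)))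
    (hμ : μ = volume.withDensity (fun x => ENNReal.ofReal (f x)))
    (hprob : IsProbabilityMeasure μ)
    (w w' w'' : ℝ → ℝ)
    (hwnn : ∀ t ≥ (0:ℝ), 0 ≤ w t) (hw0 : w 0 = 0)
    (hder : ∀ t ≥ (0:ℝ), HasDerivAt w (w' t) t)
    (hder' : ∀ t ≥ (0:ℝ), HasDerivAt w' (w'' t) t)
    (hw'pos : ∀ t ≥ (0:ℝ), 0 < w' t)
    (hwlim : Tendsto w atTop atTop)
    (hconv : ∀ t ≥ (0:ℝ), 0 ≤ w' t + t * w'' t)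
    (hint : IntegrableOn
      (fun t => t ^ (d - 1) * w (t ^ θ) * Real.exp (-(w (t ^ θ)))) (Set.Ioi 0))
    (x : EuclideanSpace ℝ (Fin d)) :
    StrictMonoOn (fun σ => entropyF w θ ρ μ x σ) (Set.Ioi (0:ℝ)) := by
  intro σ₁ hσ₁ σ₂ hσ₂ hlt
  simp only [Set.mem_Ioi] at hσ₁ hσ₂
  -- ### one-dimensional calculus facts about `w`
  have hwc : ContinuousOn w (Set.Ici 0) := fun t ht =>
    (hder t ht).continuousAt.continuousWithinAt
  have hwsm : StrictMonoOn w (Set.Ici (0:ℝ)) := by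
    apply strictMonoOn_of_deriv_pos (convex_Ici 0) hwc
    intro t ht
    rw [interior_Ici] at ht
    rw [(hder t ht.le).deriv]
    exact hw'pos t ht.le
  have hwmono : MonotoneOn w (Set.Ici (0:ℝ)) := hwsm.monotoneOn
  have hgmono : MonotoneOn (fun t => t * w' t) (Set.Ici (0:ℝ)) := by
    apply monotoneOn_of_deriv_nonneg (convex_Ici 0)
    · intro t ht
      have h : HasDerivAt (fun t => t * w' t) (1 * w' t + t * w'' t) t := by
        simpa using (hasDerivAt_id' t).fun_mul (hder' t ht)
      exact h.continuousAt.continuousWithinAt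
    · intro t ht
      rw [interior_Ici] at ht
      have h : HasDerivAt (fun t => t * w' t) (1 * w' t + t * w'' t) t := by
        simpa using (hasDerivAt_id' t).fun_mul (hder' t ht.le)
      exact h.differentiableAt.differentiableWithinAt
    · intro t ht
      rw [interior_Ici] at ht
      have h : HasDerivAt (fun t => t * w' t) (1 * w' t + t * w'' t) t := by
        simpa using (hasDerivAt_id' t).fun_mul (hder' t ht.le)
      rw [h.deriv]
      simpa using hconv t ht.le
  have hcd : ∀ σ : ℝ, 0 < σ → ∀ t ∈ Set.Ici (0:ℝ),
      HasDerivAt (fun s => w (σ * s)) (w' (σ * t) * σ) t := by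
    intro σ hσ t ht
    have h0 : (0:ℝ) ≤ σ * t := mul_nonneg hσ.le ht
    have := (hder (σ * t) h0).comp t ((hasDerivAt_id t).const_mul σ)
    exact this.congr_deriv (by simp)
  have hDmono : MonotoneOn (fun t => w (σ₂ * t) - w (σ₁ * t)) (Set.Ici (0:ℝ)) := by
    apply monotoneOn_of_deriv_nonneg (convex_Ici 0)
    · intro t ht
      exact ((hcd σ₂ hσ₂ t ht).sub (hcd σ₁ hσ₁ t ht)).continuousAt.continuousWithinAt
    · intro t ht
      rw [interior_Ici] at ht
      exact ((hcd σ₂ hσ₂ t (Set.mem_Ici.mpr (le_of_lt ht))).sub (hcd σ₁ hσ₁ t (Set.mem_Ici.mpr (le_of_lt ht)))).differentiableAt.differentiableWithinAt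
    · intro t ht
      rw [interior_Ici] at ht
      rw [(((hcd σ₂ hσ₂ t (Set.mem_Ici.mpr (le_of_lt ht))).fun_sub (hcd σ₁ hσ₁ t (Set.mem_Ici.mpr (le_of_lt ht)))) : HasDerivAt (fun t => w (σ₂ * t) - w (σ₁ * t)) _ t).deriv]
      have ht' : (0:ℝ) < t := ht
      have hmem1 : σ₁ * t ∈ Set.Ici (0:ℝ) := Set.mem_Ici.mpr (mul_nonneg hσ₁.le ht'.le)
      have hmem2 : σ₂ * t ∈ Set.Ici (0:ℝ) := Set.mem_Ici.mpr (mul_nonneg hσ₂.le ht'.le)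
      have hle : σ₁ * t ≤ σ₂ * t := by nlinarith
      have hmul : (σ₁ * t) * w' (σ₁ * t) ≤ (σ₂ * t) * w' (σ₂ * t) := hgmono hmem1 hmem2 hle
      have h2 : t * (w' (σ₁ * t) * σ₁) ≤ t * (w' (σ₂ * t) * σ₂) := by nlinarith [hmul]
      have := le_of_mul_le_mul_left h2 ht'
      linarith
  -- ### basic facts about the kernel
  have hucont : Continuous (fun y : EuclideanSpace ℝ (Fin d) => ‖x - y‖ ^ θ) :=
    (Real.continuous_rpow_const hθ.le).comp ((continuous_const.sub continuous_id).norm)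
  have hunn : ∀ y : EuclideanSpace ℝ (Fin d), 0 ≤ ‖x - y‖ ^ θ := fun y =>
    Real.rpow_nonneg (norm_nonneg _) θ
  have hHc : ∀ σ : ℝ, 0 < σ → Continuous (fun y => w (σ * ‖x - y‖ ^ θ)) := by
    intro σ hσ
    apply hwc.comp_continuous (continuous_const.mul hucont)
    intro y
    exact Set.mem_Ici.mpr (mul_nonneg hσ.le (hunn y))
  have hHnn : ∀ σ : ℝ, 0 < σ → ∀ y, 0 ≤ w (σ * ‖x - y‖ ^ θ) := fun σ hσ y =>
    hwnn _ (mul_nonneg hσ.le (hunn y))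
  have hKc : ∀ σ : ℝ, 0 < σ → Continuous (fun y => Real.exp (-(w (σ * ‖x - y‖ ^ θ)))) :=
    fun σ hσ => Real.continuous_exp.comp (hHc σ hσ).neg
  have htexp : ∀ t : ℝ, 0 ≤ t → t * Real.exp (-t) ≤ 1 := by
    intro t ht
    have h1 : t ≤ Real.exp t := by linarith [Real.add_one_le_exp t]
    calc t * Real.exp (-t) ≤ Real.exp t * Real.exp (-t) :=
          mul_le_mul_of_nonneg_right h1 (Real.exp_nonneg _)
      _ = 1 := by rw [← Real.exp_add]; simp
  have hbdd_int : ∀ φ : EuclideanSpace ℝ (Fin d) → ℝ, Continuous φ → (∀ y, ‖φ y‖ ≤ 1) →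
      Integrable φ μ := fun φ hc hb =>
    Integrable.mono' (integrable_const 1) hc.aestronglyMeasurable (ae_of_all _ hb)
  have intK : ∀ σ : ℝ, 0 < σ → Integrable (fun y => Real.exp (-(w (σ * ‖x - y‖ ^ θ)))) μ := by
    intro σ hσ
    apply hbdd_int _ (hKc σ hσ)
    intro y
    rw [Real.norm_eq_abs, Real.abs_exp]
    exact Real.exp_le_one_iff.mpr (neg_nonpos.mpr (hHnn σ hσ y))
  have intHK : ∀ σ : ℝ, 0 < σ →
      Integrable (fun y => w (σ * ‖x - y‖ ^ θ) * Real.exp (-(w (σ * ‖x - y‖ ^ θ)))) μ := by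
    intro σ hσ
    apply hbdd_int _ ((hHc σ hσ).mul (hKc σ hσ))
    intro y
    show ‖w (σ * ‖x - y‖ ^ θ) * Real.exp (-(w (σ * ‖x - y‖ ^ θ)))‖ ≤ 1
    rw [Real.norm_eq_abs, abs_of_nonneg (mul_nonneg (hHnn σ hσ y) (Real.exp_nonneg _))]
    exact htexp _ (hHnn σ hσ y)
  have hH12 : ∀ y, w (σ₁ * ‖x - y‖ ^ θ) ≤ w (σ₂ * ‖x - y‖ ^ θ) := by
    intro y
    apply hwmono (Set.mem_Ici.mpr (mul_nonneg hσ₁.le (hunn y)))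
      (Set.mem_Ici.mpr (mul_nonneg hσ₂.le (hunn y)))
    exact mul_le_mul_of_nonneg_right hlt.le (hunn y)
  have intH1K2 : Integrable
      (fun y => w (σ₁ * ‖x - y‖ ^ θ) * Real.exp (-(w (σ₂ * ‖x - y‖ ^ θ)))) μ := by
    apply hbdd_int _ ((hHc σ₁ hσ₁).mul (hKc σ₂ hσ₂))
    intro y
    show ‖w (σ₁ * ‖x - y‖ ^ θ) * Real.exp (-(w (σ₂ * ‖x - y‖ ^ θ)))‖ ≤ 1
    rw [Real.norm_eq_abs, abs_of_nonneg (mul_nonneg (hHnn σ₁ hσ₁ y) (Real.exp_nonneg _))]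
    calc w (σ₁ * ‖x - y‖ ^ θ) * Real.exp (-(w (σ₂ * ‖x - y‖ ^ θ)))
        ≤ w (σ₂ * ‖x - y‖ ^ θ) * Real.exp (-(w (σ₂ * ‖x - y‖ ^ θ))) :=
          mul_le_mul_of_nonneg_right (hH12 y) (Real.exp_nonneg _)
      _ ≤ 1 := htexp _ (hHnn σ₂ hσ₂ y)
  have hZpos : ∀ σ : ℝ, 0 < σ → 0 < ∫ y, Real.exp (-(w (σ * ‖x - y‖ ^ θ))) ∂μ := by
    intro σ hσ
    rw [integral_pos_iff_support_of_nonneg_ae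
      (ae_of_all _ fun y => (Real.exp_pos _).le) (intK σ hσ)]
    have hs : Function.support (fun y : EuclideanSpace ℝ (Fin d) =>
        Real.exp (-(w (σ * ‖x - y‖ ^ θ)))) = Set.univ :=
      Set.eq_univ_of_forall fun y => (Real.exp_pos _).ne'
    rw [hs]
    simp
  -- ### positivity of `μ` on nonempty open sets
  have hμopen : ∀ V : Set (EuclideanSpace ℝ (Fin d)), IsOpen V → V.Nonempty → 0 < μ V := by
    intro V hV hVne
    rw [hμ, withDensity_apply _ hV.measurableSet]
    by_contra hcon
    push_neg at hcon
    replace hcon : ∫⁻ y in V, ENNReal.ofReal (f y) ∂volume = 0 :=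
      le_antisymm (le_of_not_gt (by simpa using hcon)) zero_le
    rw [lintegral_eq_zero_iff hfc.measurable.ennreal_ofReal] at hcon
    have h0 : (volume.restrict V) Set.univ = 0 := by
      have : ∀ᵐ y ∂(volume.restrict V), False :=
        hcon.mono fun y hy => absurd (ENNReal.ofReal_eq_zero.mp hy) (not_le.mpr (hfpos y))
      simpa [ae_iff] using this
    rw [Measure.restrict_apply_univ] at h0
    exact absurd h0 (hV.measure_pos volume hVne).ne'
  -- rewrite the goal
  have hFeq : ∀ σ : ℝ, entropyF w θ ρ μ x σ =
      -((∫ y, w (σ * ‖x - y‖ ^ θ) * Real.exp (-(w (σ * ‖x - y‖ ^ θ))) ∂μ) /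
          (∫ y, Real.exp (-(w (σ * ‖x - y‖ ^ θ))) ∂μ))
        - Real.log (∫ y, Real.exp (-(w (σ * ‖x - y‖ ^ θ))) ∂μ) + Real.log ρ := by
    intro σ
    unfold entropyF
    rw [integral_div]
  simp only [hFeq]
  set Z₁ : ℝ := ∫ y, Real.exp (-(w (σ₁ * ‖x - y‖ ^ θ))) ∂μ with hZ₁def
  set Z₂ : ℝ := ∫ y, Real.exp (-(w (σ₂ * ‖x - y‖ ^ θ))) ∂μ with hZ₂def
  set G₁ : ℝ := ∫ y, w (σ₁ * ‖x - y‖ ^ θ) * Real.exp (-(w (σ₁ * ‖x - y‖ ^ θ))) ∂μ with hG₁def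
  set G₂ : ℝ := ∫ y, w (σ₂ * ‖x - y‖ ^ θ) * Real.exp (-(w (σ₂ * ‖x - y‖ ^ θ))) ∂μ with hG₂def
  set P : ℝ := ∫ y, w (σ₁ * ‖x - y‖ ^ θ) * Real.exp (-(w (σ₂ * ‖x - y‖ ^ θ))) ∂μ with hPdef
  have hZ₁pos : 0 < Z₁ := hZpos σ₁ hσ₁
  have hZ₂pos : 0 < Z₂ := hZpos σ₂ hσ₂
  set c : ℝ := Real.log Z₁ - Real.log Z₂ with hcdef
  -- ### Chebyshev correlation inequality
  have hcheb : P * Z₁ ≤ G₁ * Z₂ := by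
    apply cheb_aux (intK σ₁ hσ₁) (intK σ₂ hσ₂) (intHK σ₁ hσ₁) intH1K2
    intro a b
    rcases le_total (‖x - a‖ ^ θ) (‖x - b‖ ^ θ) with hab | hab
    · have f1 : w (σ₁ * ‖x - a‖ ^ θ) ≤ w (σ₁ * ‖x - b‖ ^ θ) :=
        hwmono (Set.mem_Ici.mpr (mul_nonneg hσ₁.le (hunn a)))
          (Set.mem_Ici.mpr (mul_nonneg hσ₁.le (hunn b)))
          (mul_le_mul_of_nonneg_left hab hσ₁.le)
      have f2 : w (σ₂ * ‖x - a‖ ^ θ) - w (σ₁ * ‖x - a‖ ^ θ)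
          ≤ w (σ₂ * ‖x - b‖ ^ θ) - w (σ₁ * ‖x - b‖ ^ θ) :=
        hDmono (Set.mem_Ici.mpr (hunn a)) (Set.mem_Ici.mpr (hunn b)) hab
      have f3 : Real.exp (-(w (σ₁ * ‖x - a‖ ^ θ))) * Real.exp (-(w (σ₂ * ‖x - b‖ ^ θ)))
          ≤ Real.exp (-(w (σ₂ * ‖x - a‖ ^ θ))) * Real.exp (-(w (σ₁ * ‖x - b‖ ^ θ))) := by
        rw [← Real.exp_add, ← Real.exp_add]
        exact Real.exp_le_exp.mpr (by linarith)
      exact mul_nonpos_iff.mpr (Or.inr ⟨by linarith, by linarith⟩)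
    · have f1 : w (σ₁ * ‖x - b‖ ^ θ) ≤ w (σ₁ * ‖x - a‖ ^ θ) :=
        hwmono (Set.mem_Ici.mpr (mul_nonneg hσ₁.le (hunn b)))
          (Set.mem_Ici.mpr (mul_nonneg hσ₁.le (hunn a)))
          (mul_le_mul_of_nonneg_left hab hσ₁.le)
      have f2 : w (σ₂ * ‖x - b‖ ^ θ) - w (σ₁ * ‖x - b‖ ^ θ)
          ≤ w (σ₂ * ‖x - a‖ ^ θ) - w (σ₁ * ‖x - a‖ ^ θ) :=
        hDmono (Set.mem_Ici.mpr (hunn b)) (Set.mem_Ici.mpr (hunn a)) hab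
      have f3 : Real.exp (-(w (σ₂ * ‖x - a‖ ^ θ))) * Real.exp (-(w (σ₁ * ‖x - b‖ ^ θ)))
          ≤ Real.exp (-(w (σ₁ * ‖x - a‖ ^ θ))) * Real.exp (-(w (σ₂ * ‖x - b‖ ^ θ))) := by
        rw [← Real.exp_add, ← Real.exp_add]
        exact Real.exp_le_exp.mpr (by linarith)
      exact mul_nonpos_iff.mpr (Or.inl ⟨by linarith, by linarith⟩)
  -- ### strict Gibbs inequality
  set s : EuclideanSpace ℝ (Fin d) → ℝ :=
    fun y => Real.exp (w (σ₂ * ‖x - y‖ ^ θ) - w (σ₁ * ‖x - y‖ ^ θ)) * (Z₂ / Z₁) with hsdef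
  have hspos : ∀ y, 0 < s y := fun y =>
    mul_pos (Real.exp_pos _) (div_pos hZ₂pos hZ₁pos)
  have hlogs : ∀ y, Real.log (s y)
      = w (σ₂ * ‖x - y‖ ^ θ) - w (σ₁ * ‖x - y‖ ^ θ) - c := by
    intro y
    rw [hsdef]
    rw [Real.log_mul (Real.exp_ne_zero _) (ne_of_gt (div_pos hZ₂pos hZ₁pos)),
      Real.log_exp, Real.log_div (ne_of_gt hZ₂pos) (ne_of_gt hZ₁pos), hcdef]
    ring
  set W : EuclideanSpace ℝ (Fin d) → ℝ := fun y =>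
    (Z₂ / Z₁) * Real.exp (-(w (σ₁ * ‖x - y‖ ^ θ))) - Real.exp (-(w (σ₂ * ‖x - y‖ ^ θ)))
    - w (σ₂ * ‖x - y‖ ^ θ) * Real.exp (-(w (σ₂ * ‖x - y‖ ^ θ)))
    + w (σ₁ * ‖x - y‖ ^ θ) * Real.exp (-(w (σ₂ * ‖x - y‖ ^ θ)))
    + c * Real.exp (-(w (σ₂ * ‖x - y‖ ^ θ))) with hWdef
  have hWeq : ∀ y, W y = (s y - 1 - Real.log (s y)) * Real.exp (-(w (σ₂ * ‖x - y‖ ^ θ))) := by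
    intro y
    have e0 : Real.exp (w (σ₂ * ‖x - y‖ ^ θ) - w (σ₁ * ‖x - y‖ ^ θ)) *
        Real.exp (-(w (σ₂ * ‖x - y‖ ^ θ))) = Real.exp (-(w (σ₁ * ‖x - y‖ ^ θ))) := by
      rw [← Real.exp_add]
      congr 1
      ring
    have e1 : (Z₂ / Z₁) * Real.exp (-(w (σ₁ * ‖x - y‖ ^ θ)))
        = s y * Real.exp (-(w (σ₂ * ‖x - y‖ ^ θ))) := by
      simp only [hsdef]
      rw [mul_comm (Real.exp _) (Z₂ / Z₁), mul_assoc, e0]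
    simp only [hWdef]
    rw [e1, hlogs y]
    ring
  have hWnn : ∀ y, 0 ≤ W y := by
    intro y
    rw [hWeq y]
    have := Real.log_le_sub_one_of_pos (hspos y)
    exact mul_nonneg (by linarith) (Real.exp_nonneg _)
  have hWcont : Continuous W := by
    rw [hWdef]
    exact (((((continuous_const.mul (hKc σ₁ hσ₁)).sub (hKc σ₂ hσ₂)).sub
      ((hHc σ₂ hσ₂).mul (hKc σ₂ hσ₂))).add ((hHc σ₁ hσ₁).mul (hKc σ₂ hσ₂))).add
      (continuous_const.mul (hKc σ₂ hσ₂)))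
  have hWint : Integrable W μ := by
    rw [hWdef]
    exact (((((intK σ₁ hσ₁).const_mul (Z₂ / Z₁)).sub (intK σ₂ hσ₂)).sub
      (intHK σ₂ hσ₂)).add intH1K2).add ((intK σ₂ hσ₂).const_mul c)
  -- a point where `W` is strictly positive
  obtain ⟨y₀, hy₀⟩ : ∃ y₀, Real.log (s y₀) ≠ 0 := by
    by_cases hc0 : c = 0
    · refine ⟨x - EuclideanSpace.single (⟨0, by omega⟩ : Fin d) (1:ℝ), ?_⟩
      rw [hlogs, hc0]
      have hn : ‖x - (x - EuclideanSpace.single (⟨0, by omega⟩ : Fin d) (1:ℝ))‖ = 1 := by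
        simp [EuclideanSpace.norm_single]
      rw [hn, Real.one_rpow]
      have hlt' : w (σ₁ * 1) < w (σ₂ * 1) :=
        hwsm (Set.mem_Ici.mpr (by linarith)) (Set.mem_Ici.mpr (by linarith)) (by linarith)
      simp only [sub_zero]
      intro hcontra
      rw [sub_eq_zero] at hcontra
      exact absurd hcontra (ne_of_gt hlt')
    · refine ⟨x, ?_⟩
      rw [hlogs]
      have hn : ‖x - x‖ ^ θ = 0 := by
        rw [sub_self, norm_zero]
        exact Real.zero_rpow (ne_of_gt hθ)
      rw [hn, mul_zero, mul_zero, sub_self, zero_sub]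
      simpa using hc0
  have hWy₀ : 0 < W y₀ := by
    rw [hWeq y₀]
    have hs1 : s y₀ ≠ 1 := fun h => hy₀ (by rw [h, Real.log_one])
    have := Real.log_lt_sub_one_of_pos (hspos y₀) hs1
    exact mul_pos (by linarith) (Real.exp_pos _)
  have hWintpos : 0 < ∫ y, W y ∂μ := by
    rw [integral_pos_iff_support_of_nonneg_ae (ae_of_all _ hWnn) hWint]
    have hVopen : IsOpen {y | 0 < W y} := isOpen_lt continuous_const hWcont
    have hsub : {y | 0 < W y} ⊆ Function.support W := fun y hy => ne_of_gt hy
    calc (0:ENNReal) < μ {y | 0 < W y} := hμopen _ hVopen ⟨y₀, hWy₀⟩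
      _ ≤ μ (Function.support W) := measure_mono hsub
  -- compute `∫ W`
  have hWcalc : ∫ y, W y ∂μ = Z₂ - Z₂ - G₂ + P + c * Z₂ := by
    rw [hWdef]
    have i1 : Integrable (fun y =>
        (Z₂ / Z₁) * Real.exp (-(w (σ₁ * ‖x - y‖ ^ θ)))) μ := (intK σ₁ hσ₁).const_mul _
    have i12 : Integrable (fun y =>
        (Z₂ / Z₁) * Real.exp (-(w (σ₁ * ‖x - y‖ ^ θ))) -
        Real.exp (-(w (σ₂ * ‖x - y‖ ^ θ)))) μ := i1.sub (intK σ₂ hσ₂)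
    have i123 : Integrable (fun y =>
        (Z₂ / Z₁) * Real.exp (-(w (σ₁ * ‖x - y‖ ^ θ))) -
        Real.exp (-(w (σ₂ * ‖x - y‖ ^ θ))) -
        w (σ₂ * ‖x - y‖ ^ θ) * Real.exp (-(w (σ₂ * ‖x - y‖ ^ θ)))) μ := i12.sub (intHK σ₂ hσ₂)
    have i1234 : Integrable (fun y =>
        (Z₂ / Z₁) * Real.exp (-(w (σ₁ * ‖x - y‖ ^ θ))) -
        Real.exp (-(w (σ₂ * ‖x - y‖ ^ θ))) -
        w (σ₂ * ‖x - y‖ ^ θ) * Real.exp (-(w (σ₂ * ‖x - y‖ ^ θ))) +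
        w (σ₁ * ‖x - y‖ ^ θ) * Real.exp (-(w (σ₂ * ‖x - y‖ ^ θ)))) μ := i123.add intH1K2
    rw [integral_add i1234 ((intK σ₂ hσ₂).const_mul c),
      integral_add i123 intH1K2,
      integral_sub i12 (intHK σ₂ hσ₂),
      integral_sub i1 (intK σ₂ hσ₂),
      integral_const_mul, integral_const_mul]
    rw [← hZ₁def, ← hZ₂def, ← hG₂def, ← hPdef]
    field_simp
  have hGibbs : G₂ < P + c * Z₂ := by
    rw [hWcalc] at hWintpos
    linarith
  -- ### conclusion
  have h5 : G₂ / Z₂ < P / Z₂ + c := by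
    rw [div_add' _ _ _ (ne_of_gt hZ₂pos), div_lt_div_iff₀ hZ₂pos hZ₂pos]
    nlinarith [hGibbs, hZ₂pos]
  have h6 : P / Z₂ ≤ G₁ / Z₁ := by
    rw [div_le_div_iff₀ hZ₂pos hZ₁pos]
    linarith [hcheb]
  have : G₂ / Z₂ < G₁ / Z₁ + c := by linarith
  rw [hcdef] at this
  linarith
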